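/- There exists a constant C > 0 such that the following holds. Let H be a real Hilbert space, let T > 0, let N ≥ 2 be an integer, set Δt := T/N and t_n := n·Δt for n = 0, …, N, and let w : ℝ → H be twice continuously differentiable. Then Δt · Σ_{n=1}^{N−1} ‖ (1/2)w(t_{n+1}) − w(t_n) + (1/2)w(t_{n−1}) ‖² ≤ C Δt⁴ ∫_0^T ‖w''(s)‖² ds. -/

import Mathlib

open intervalIntegral MeasureTheory Finset

/-- Elementary Cauchy–Schwarz for interval integrals of continuous functions. -/
lemma cs_interval (g : ℝ → ℝ) (hg : Continuous g) {a b : ℝ} (hab : a ≤ b) :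
    (∫ x in a..b, g x) ^ 2 ≤ (b - a) * ∫ x in a..b, g x ^ 2 := by
  set I := ∫ x in a..b, g x with hI
  set J := ∫ x in a..b, g x ^ 2 with hJ
  set L := b - a with hL
  have hL0 : 0 ≤ L := by simp [hL]; linarith
  rcases eq_or_lt_of_le hL0 with h0 | h0
  · have hab' : a = b := by simp [hL] at h0; linarith
    have hI0 : I = 0 := by rw [hI, hab', intervalIntegral.integral_same]
    have hJ0 : J = 0 := by rw [hJ, hab', intervalIntegral.integral_same]
    rw [hI0]
    nlinarith
  · have key : 0 ≤ ∫ x in a..b, (L * g x - I) ^ 2 := by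
      apply intervalIntegral.integral_nonneg hab
      intro x _; positivity
    have expand : (∫ x in a..b, (L * g x - I) ^ 2) = L * (L * J - I ^ 2) := by
      have h1 : ∀ x, (L * g x - I) ^ 2 = L^2 * g x ^2 - (2 * L * I) * g x + I^2 := by
        intro x; ring
      simp_rw [h1]
      rw [intervalIntegral.integral_add, intervalIntegral.integral_sub,
        intervalIntegral.integral_const_mul, intervalIntegral.integral_const_mul,
        intervalIntegral.integral_const]
      · simp [hL.symm]; ring
      · exact (continuous_const.mul (hg.pow 2)).intervalIntegrable _ _
      · exact (continuous_const.mul hg).intervalIntegrable _ _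
      · exact ((continuous_const.mul (hg.pow 2)).sub (continuous_const.mul hg)).intervalIntegrable _ _
      · exact intervalIntegrable_const
    nlinarith [key, expand]

section Pointwise

variable {H : Type} [NormedAddCommGroup H] [NormedSpace ℝ H] [CompleteSpace H]

lemma second_diff_bound (w : ℝ → H) (hw : ContDiff ℝ 2 w) (Δ t : ℝ) (hΔ : 0 ≤ Δ) :
    ‖(1/2 : ℝ) • w (t + Δ) - w t + (1/2 : ℝ) • w (t - Δ)‖ ≤
      (Δ / 2) * ∫ s in (t - Δ)..(t + Δ), ‖iteratedDeriv 2 w s‖ := by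
  have hdw : Differentiable ℝ w := hw.differentiable (by norm_num)
  have hdw1 : Differentiable ℝ (deriv w) := by
    have := hw.differentiable_iteratedDeriv 1 (by norm_num)
    rwa [iteratedDeriv_one] at this
  have h2 : iteratedDeriv 2 w = deriv (deriv w) := by
    rw [show (2:ℕ) = 1+1 from rfl, iteratedDeriv_succ, iteratedDeriv_one]
  have hc2 : Continuous (deriv (deriv w)) := by
    rw [← h2]; exact hw.continuous_iteratedDeriv 2 le_rfl
  have hc1 : Continuous (deriv w) := hdw1.continuous
  -- FTC
  have ftc : ∀ a b : ℝ, w b - w a = ∫ s in a..b, deriv w s := fun a b => by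
    rw [intervalIntegral.integral_deriv_eq_sub (fun x _ => hdw x)
      (hc1.intervalIntegrable _ _)]
  have ftc1 : ∀ a b : ℝ, deriv w b - deriv w a = ∫ s in a..b, deriv (deriv w) s :=
    fun a b => by
    rw [intervalIntegral.integral_deriv_eq_sub (fun x _ => hdw1 x)
      (hc2.intervalIntegrable _ _)]
  have hr : (1/2 : ℝ) • w (t + Δ) - w t + (1/2 : ℝ) • w (t - Δ)
      = (1/2 : ℝ) • ∫ s in t..(t + Δ), (deriv w s - deriv w (s - Δ)) := by
    rw [intervalIntegral.integral_sub (hc1.intervalIntegrable _ _)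
      ((by fun_prop : Continuous fun s : ℝ => deriv w (s - Δ)).intervalIntegrable _ _)]
    have e1 : (∫ s in t..(t+Δ), deriv w (s - Δ)) = ∫ s in (t-Δ)..t, deriv w s := by
      rw [intervalIntegral.integral_comp_sub_right]
      norm_num
    rw [e1, ← ftc, ← ftc]
    module
  rw [hr, norm_smul]
  have hb : ‖∫ s in t..(t + Δ), (deriv w s - deriv w (s - Δ))‖ ≤
      (∫ s in (t - Δ)..(t + Δ), ‖iteratedDeriv 2 w s‖) * |t + Δ - t| := by
    apply intervalIntegral.norm_integral_le_of_norm_le_const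
    intro s hs
    rw [Set.uIoc_of_le (by linarith)] at hs
    rw [ftc1 (s - Δ) s]
    calc ‖∫ u in (s-Δ)..s, deriv (deriv w) u‖
        ≤ ∫ u in (s-Δ)..s, ‖deriv (deriv w) u‖ :=
          intervalIntegral.norm_integral_le_integral_norm (by linarith)
      _ ≤ ∫ u in (t-Δ)..(t+Δ), ‖deriv (deriv w) u‖ := by
          apply intervalIntegral.integral_mono_interval (by linarith [hs.1, hs.2])
            (by linarith [hs.1, hs.2]) (by linarith [hs.1, hs.2])
          · exact Filter.Eventually.of_forall fun x => norm_nonneg _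
          · exact (hc2.norm).intervalIntegrable _ _
      _ = ∫ u in (t-Δ)..(t+Δ), ‖iteratedDeriv 2 w u‖ := by rw [h2]
  have hnn : 0 ≤ ∫ s in (t - Δ)..(t + Δ), ‖iteratedDeriv 2 w s‖ :=
    intervalIntegral.integral_nonneg (by linarith) (fun x _ => norm_nonneg _)
  have habs : |t + Δ - t| = Δ := by rw [abs_of_nonneg (by linarith)]; ring
  rw [habs] at hb
  have : ‖(1/2 : ℝ)‖ = 1/2 := by norm_num
  rw [this]
  nlinarith [hb, norm_nonneg (∫ s in t..(t + Δ), (deriv w s - deriv w (s - Δ)))]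

end Pointwise

/-- Summed second-order consistency estimate for the time filter residual. -/
theorem filter_residual_summed_bound :
    ∃ C : ℝ, 0 < C ∧
      ∀ (H : Type) (_ : NormedAddCommGroup H) (_ : InnerProductSpace ℝ H)
        (_ : CompleteSpace H)
        (T : ℝ), 0 < T →
        ∀ (N : ℕ), 2 ≤ N →
        ∀ (w : ℝ → H), ContDiff ℝ 2 w →
          (T / N) * ∑ n ∈ Finset.Icc 1 (N - 1),
              ‖(1/2 : ℝ) • w ((↑(n + 1) : ℝ) * (T / N)) - w ((n : ℝ) * (T / N)) +
                  (1/2 : ℝ) • w ((↑(n - 1) : ℝ) * (T / N))‖ ^ 2 ≤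
            C * (T / N) ^ 4 * ∫ s in (0 : ℝ)..T, ‖iteratedDeriv 2 w s‖ ^ 2 := by
  refine ⟨1, one_pos, ?_⟩
  intro H _ _ _ T hT N hN w hw
  set Δ : ℝ := T / N with hΔdef
  have hΔ : 0 < Δ := by positivity
  set g : ℝ → ℝ := fun s => ‖iteratedDeriv 2 w s‖ with hg
  have hgc : Continuous g := (hw.continuous_iteratedDeriv 2 le_rfl).norm
  have hgnn : ∀ x, 0 ≤ g x := fun x => norm_nonneg _
  -- per-term bound
  have term_bound : ∀ n ∈ Finset.Icc 1 (N - 1),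
      ‖(1/2 : ℝ) • w ((↑(n + 1) : ℝ) * Δ) - w ((n : ℝ) * Δ) +
          (1/2 : ℝ) • w ((↑(n - 1) : ℝ) * Δ)‖ ^ 2 ≤
        (Δ^3 / 2) * ∫ s in ((n:ℝ) * Δ - Δ)..((n:ℝ) * Δ + Δ), g s ^ 2 := by
    intro n hn
    rw [Finset.mem_Icc] at hn
    have h1n : 1 ≤ n := hn.1
    set t : ℝ := (n : ℝ) * Δ with ht
    have e1 : ((↑(n + 1) : ℝ)) * Δ = t + Δ := by push_cast; ring
    have e2 : ((↑(n - 1) : ℝ)) * Δ = t - Δ := by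
      rw [Nat.cast_sub h1n]; push_cast; ring
    rw [e1, e2]
    have hb := second_diff_bound w hw Δ t hΔ.le
    have hsq : ‖(1/2 : ℝ) • w (t + Δ) - w t + (1/2 : ℝ) • w (t - Δ)‖ ^ 2 ≤
        ((Δ / 2) * ∫ s in (t - Δ)..(t + Δ), g s) ^ 2 := by
      apply pow_le_pow_left₀ (norm_nonneg _) hb
    have hcs := cs_interval g hgc (a := t - Δ) (b := t + Δ) (by linarith)
    have hIint : 0 ≤ ∫ s in (t - Δ)..(t + Δ), g s :=
      intervalIntegral.integral_nonneg (by linarith) (fun x _ => hgnn x)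
    have h2d : (t + Δ) - (t - Δ) = 2 * Δ := by ring
    rw [h2d] at hcs
    calc ‖(1/2 : ℝ) • w (t + Δ) - w t + (1/2 : ℝ) • w (t - Δ)‖ ^ 2
        ≤ ((Δ / 2) * ∫ s in (t - Δ)..(t + Δ), g s) ^ 2 := hsq
      _ = (Δ^2 / 4) * (∫ s in (t - Δ)..(t + Δ), g s) ^ 2 := by ring
      _ ≤ (Δ^2 / 4) * (2 * Δ * ∫ s in (t - Δ)..(t + Δ), g s ^ 2) := by
          apply mul_le_mul_of_nonneg_left hcs (by positivity)
      _ = (Δ^3 / 2) * ∫ s in (t - Δ)..(t + Δ), g s ^ 2 := by ring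
  -- sum of overlapping integrals ≤ 2 ∫_0^T
  have hgint : ∀ a b : ℝ, IntervalIntegrable (fun s => g s ^ 2) volume a b :=
    fun a b => (hgc.pow 2).intervalIntegrable a b
  have hT' : (N : ℝ) * Δ = T := by
    rw [hΔdef]; field_simp [(Nat.cast_ne_zero.mpr (by omega) : (N:ℝ) ≠ 0)]
  have sum_int : ∑ n ∈ Finset.Icc 1 (N - 1),
      (∫ s in ((n:ℝ) * Δ - Δ)..((n:ℝ) * Δ + Δ), g s ^ 2) ≤
      2 * ∫ s in (0:ℝ)..T, g s ^ 2 := by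
    have split : ∀ n ∈ Finset.Icc 1 (N-1),
        (∫ s in ((n:ℝ) * Δ - Δ)..((n:ℝ) * Δ + Δ), g s ^ 2) =
        (∫ s in ((n:ℝ) * Δ - Δ)..((n:ℝ) * Δ), g s ^ 2) +
        (∫ s in ((n:ℝ) * Δ)..((n:ℝ) * Δ + Δ), g s ^ 2) := by
      intro n _
      rw [intervalIntegral.integral_add_adjacent_intervals (hgint _ _) (hgint _ _)]
    rw [Finset.sum_congr rfl split, Finset.sum_add_distrib]
    have tel1 : ∑ n ∈ Finset.Icc 1 (N-1),
        (∫ s in ((n:ℝ) * Δ - Δ)..((n:ℝ) * Δ), g s ^ 2) ≤ ∫ s in (0:ℝ)..T, g s ^ 2 := by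
      have key : ∑ i ∈ Finset.range (N-1),
          (∫ s in ((i:ℝ) * Δ)..(((i:ℝ)+1) * Δ), g s ^ 2) = ∫ s in (0:ℝ)..((N-1:ℕ):ℝ) * Δ, g s ^ 2 := by
        have := intervalIntegral.sum_integral_adjacent_intervals
          (a := fun k => (k : ℝ) * Δ) (n := N - 1) (f := fun s => g s ^ 2)
          (fun k _ => hgint _ _)
        simpa using this
      have eq1 : ∑ n ∈ Finset.Icc 1 (N-1),
          (∫ s in ((n:ℝ) * Δ - Δ)..((n:ℝ) * Δ), g s ^ 2) =
          ∑ i ∈ Finset.range (N-1),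
          (∫ s in ((i:ℝ) * Δ)..(((i:ℝ)+1) * Δ), g s ^ 2) := by
        rw [show Finset.Icc 1 (N-1) = Finset.Ico 1 N by
              rw [← Finset.Ico_add_one_right_eq_Icc]; congr 1; omega,
           Finset.sum_Ico_eq_sum_range]
        apply Finset.sum_congr rfl
        intro i _
        have hc : ((1+i:ℕ):ℝ) = (i:ℝ)+1 := by push_cast; ring
        rw [hc]
        congr 1 <;> ring
      rw [eq1, key]
      apply intervalIntegral.integral_mono_interval le_rfl (by positivity) ?_ 
        (Filter.Eventually.of_forall fun x => by positivity) (hgint _ _)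
      rw [← hT']
      have : ((N-1:ℕ):ℝ) ≤ (N:ℝ) := by
        push_cast [Nat.cast_sub (by omega : 1 ≤ N)]; linarith
      nlinarith
    have tel2 : ∑ n ∈ Finset.Icc 1 (N-1),
        (∫ s in ((n:ℝ) * Δ)..((n:ℝ) * Δ + Δ), g s ^ 2) ≤ ∫ s in (0:ℝ)..T, g s ^ 2 := by
      have key := intervalIntegral.sum_integral_adjacent_intervals
          (a := fun k : ℕ => ((k : ℝ) + 1) * Δ) (n := N - 1) (f := fun s => g s ^ 2)
          (fun k _ => hgint _ _)
      have eq1 : ∑ n ∈ Finset.Icc 1 (N-1),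
          (∫ s in ((n:ℝ) * Δ)..((n:ℝ) * Δ + Δ), g s ^ 2) =
          ∑ i ∈ Finset.range (N-1),
          (∫ s in (((i:ℕ):ℝ)+1) * Δ..(((i+1:ℕ):ℝ)+1) * Δ, g s ^ 2) := by
        rw [show Finset.Icc 1 (N-1) = Finset.Ico 1 N by
              rw [← Finset.Ico_add_one_right_eq_Icc]; congr 1; omega,
           Finset.sum_Ico_eq_sum_range]
        apply Finset.sum_congr rfl
        intro i _
        have hc : ((1+i:ℕ):ℝ) = (i:ℝ)+1 := by push_cast; ring
        rw [hc]
        congr 1 <;> push_cast <;> ring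
      rw [eq1, key]
      beta_reduce
      have hN1 : ((((N-1:ℕ)):ℝ)+1) * Δ = T := by
        rw [Nat.cast_sub (by omega : 1 ≤ N), ← hT']; ring
      rw [hN1, show (((0:ℕ):ℝ)+1) * Δ = Δ by norm_num]
      apply intervalIntegral.integral_mono_interval (by positivity) (by nlinarith [hT']) le_rfl
        (Filter.Eventually.of_forall fun x => by positivity) (hgint _ _)
    linarith
  have step := Finset.sum_le_sum term_bound
  have intnn : 0 ≤ ∫ s in (0:ℝ)..T, g s ^ 2 :=
    intervalIntegral.integral_nonneg hT.le (fun x _ => by positivity)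
  calc Δ * ∑ n ∈ Finset.Icc 1 (N - 1),
        ‖(1/2 : ℝ) • w ((↑(n + 1) : ℝ) * Δ) - w ((n : ℝ) * Δ) +
            (1/2 : ℝ) • w ((↑(n - 1) : ℝ) * Δ)‖ ^ 2
      ≤ Δ * ∑ n ∈ Finset.Icc 1 (N - 1),
        ((Δ^3 / 2) * ∫ s in ((n:ℝ) * Δ - Δ)..((n:ℝ) * Δ + Δ), g s ^ 2) :=
        mul_le_mul_of_nonneg_left step hΔ.le
    _ = Δ * (Δ^3/2) * ∑ n ∈ Finset.Icc 1 (N - 1),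
        (∫ s in ((n:ℝ) * Δ - Δ)..((n:ℝ) * Δ + Δ), g s ^ 2) := by
        rw [← Finset.mul_sum]; ring
    _ ≤ Δ * (Δ^3/2) * (2 * ∫ s in (0:ℝ)..T, g s ^ 2) := by
        apply mul_le_mul_of_nonneg_left sum_int (by positivity)
    _ = 1 * Δ ^ 4 * ∫ s in (0:ℝ)..T, g s ^ 2 := by ring
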